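/- A MAD family A is strongly tight if and only if: whenever {B_n : n ∈ ω} are infinite subsets of ω such that there exist A_n ∈ A with B_n ⊆ A_n for all n and each A ∈ A equals A_n for only finitely many n, then there exists A ∈ I(A) with A ∩ B_n ≠ ∅ for all n. -/

import Mathlib

/-- An ideal on a countable set: closed under subsets and finite unions,
contains all finite sets, and is proper. -/
def IsIdealOn {α : Type*} (I : Set (Set α)) : Prop :=
  (∀ A ∈ I, ∀ B : Set α, B ⊆ A → B ∈ I) ∧
  (∀ A ∈ I, ∀ B ∈ I, A ∪ B ∈ I) ∧
  (∀ A : Set α, A.Finite → A ∈ I) ∧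
  Set.univ ∉ I

/-- The Shelah-Steprāns property of an ideal. -/
def ShelahSteprans {α : Type*} (I : Set (Set α)) : Prop :=
  ∀ X : Set (Set α),
    (∀ s ∈ X, s.Finite ∧ s.Nonempty) →
    (∀ A ∈ I, ∃ s ∈ X, s ∩ A = ∅) →
    ∃ Y ⊆ X, Y.Infinite ∧ ⋃₀ Y ∈ I

/-- An almost disjoint family: an infinite family of infinite subsets of ω
with pairwise finite intersections. -/
def IsADFamily (𝒜 : Set (Set ℕ)) : Prop :=
  𝒜.Infinite ∧ (∀ A ∈ 𝒜, A.Infinite) ∧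
  ∀ A ∈ 𝒜, ∀ B ∈ 𝒜, A ≠ B → (A ∩ B).Finite

/-- A MAD family: a maximal almost disjoint family. -/
def IsMADFamily (𝒜 : Set (Set ℕ)) : Prop :=
  IsADFamily 𝒜 ∧ ∀ X : Set ℕ, X.Infinite → ∃ A ∈ 𝒜, (X ∩ A).Infinite

/-- The ideal generated by the family `𝒜` together with the finite sets. -/
def idealOf (𝒜 : Set (Set ℕ)) : Set (Set ℕ) :=
  {B | ∃ F : Set (Set ℕ), F ⊆ 𝒜 ∧ F.Finite ∧ (B \ ⋃₀ F).Finite}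

/-- Strong tightness of an ideal. -/
def StronglyTight (I : Set (Set ℕ)) : Prop :=
  ∀ X : ℕ → Set ℕ, (∀ n, (X n).Infinite) →
    (∀ Y ∈ I, {n : ℕ | (X n \ Y).Finite}.Finite) →
    ∃ A ∈ I, ∀ n, (A ∩ X n).Nonempty



open Classical in
/-- One step of the selection. -/
noncomputable def madStep (C : ℕ → Set (Set ℕ)) (l : List (Set ℕ)) : Set ℕ :=
  if h : ∃ A, A ∈ C l.length ∧ A ∉ l then h.choose
  else if h2 : ∃ k, ∀ A ∈ C l.length, A ∈ l.take k then
    (if h3 : ∃ A, A ∈ C l.length ∧ A ∉ l.take (Nat.find h2 - 1) then h3.choose else ∅)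
  else ∅

/-- The list of the first `n` selected sets. -/
noncomputable def selList (C : ℕ → Set (Set ℕ)) : ℕ → List (Set ℕ)
  | 0 => []
  | n+1 => selList C n ++ [madStep C (selList C n)]

/-- The `n`-th selected set. -/
noncomputable def selW (C : ℕ → Set (Set ℕ)) (n : ℕ) : Set ℕ := madStep C (selList C n)

lemma selList_length (C : ℕ → Set (Set ℕ)) (n : ℕ) : (selList C n).length = n := by
  induction n with
  | zero => rfl
  | succ n ih => simp [selList, ih]

lemma selList_eq_map (C : ℕ → Set (Set ℕ)) (n : ℕ) :
    selList C n = (List.range n).map (selW C) := by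
  induction n with
  | zero => rfl
  | succ n ih => simp [selList, List.range_succ, ih, selW]

lemma mem_selList (C : ℕ → Set (Set ℕ)) (n : ℕ) (A : Set ℕ) :
    A ∈ selList C n ↔ ∃ m < n, selW C m = A := by
  simp [selList_eq_map, List.mem_map, List.mem_range]

lemma selList_take (C : ℕ → Set (Set ℕ)) {k n : ℕ} (h : k ≤ n) :
    (selList C n).take k = selList C k := by
  rw [selList_eq_map, selList_eq_map, ← List.map_take, List.take_range,
    Nat.min_eq_left h]

lemma selList_full_take (C : ℕ → Set (Set ℕ)) (n : ℕ) :
    (selList C n).take n = selList C n := by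
  have : (selList C n).take (selList C n).length = selList C n := List.take_length
  rwa [selList_length] at this

lemma selW_spec (C : ℕ → Set (Set ℕ)) (hCne : ∀ n, (C n).Nonempty) (n : ℕ) :
    selW C n ∈ C n ∧ (selW C n ∈ selList C n →
      ∃ j < n, selW C j = selW C n ∧ selW C j ∉ selList C j ∧
        ∀ A ∈ C n, A ∈ selList C (j+1)) := by
  classical
  have hm : (selList C n).length = n := selList_length C n
  have hsub : C ((selList C n).length) ⊆ C n := by rw [hm]
  have hsub' : C n ⊆ C ((selList C n).length) := by rw [hm]
  have hd : selW C n = madStep C (selList C n) := rfl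
  unfold madStep at hd
  split_ifs at hd with h h2 h3
  · rw [hd]
    exact ⟨hsub h.choose_spec.1, fun hmem => absurd hmem h.choose_spec.2⟩
  · -- fallback case
    have hc1 : h3.choose ∈ C n := hsub h3.choose_spec.1
    have hkspec := Nat.find_spec h2
    have hk1 : 1 ≤ Nat.find h2 := by
      refine Nat.pos_of_ne_zero fun h0 => ?_
      obtain ⟨A, hA⟩ := hCne n
      have hsp := hkspec A (hsub' hA)
      rw [h0] at hsp
      simp at hsp
    have hkn : Nat.find h2 ≤ n := by
      refine Nat.find_le ?_
      intro A hA
      rw [selList_full_take]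
      by_contra hnot
      exact h ⟨A, hA, hnot⟩
    rw [hd]
    refine ⟨hc1, fun hmem => ?_⟩
    have hsk : h3.choose ∈ selList C (Nat.find h2) := by
      rw [← selList_take C hkn]
      exact hkspec _ h3.choose_spec.1
    have hsk1 : h3.choose ∉ selList C (Nat.find h2 - 1) := by
      rw [← selList_take C (le_trans (Nat.sub_le _ 1) hkn)]
      exact h3.choose_spec.2
    have hkeq : Nat.find h2 = (Nat.find h2 - 1) + 1 := (Nat.succ_pred_eq_of_pos hk1).symm
    have hval : selW C (Nat.find h2 - 1) = h3.choose := by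
      obtain ⟨m, hm1, hm2⟩ := (mem_selList C _ _).1 hsk
      have hnm : ¬ m < Nat.find h2 - 1 :=
        fun hc => hsk1 ((mem_selList C _ _).2 ⟨m, hc, hm2⟩)
      have hme : m = Nat.find h2 - 1 := by omega
      exact hme ▸ hm2
    refine ⟨Nat.find h2 - 1, lt_of_lt_of_le (Nat.sub_lt hk1 one_pos) hkn, hval, ?_, ?_⟩
    · rw [hval]; exact hsk1
    · intro A hA
      rw [show (Nat.find h2 - 1)+1 = Nat.find h2 from hkeq.symm, ← selList_take C hkn]
      exact hkspec A (hsub' hA)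
  · exfalso
    apply h3
    have hkspec := Nat.find_spec h2
    have hk1 : 1 ≤ Nat.find h2 := by
      refine Nat.pos_of_ne_zero fun h0 => ?_
      obtain ⟨A, hA⟩ := hCne n
      have hsp := hkspec A (hsub' hA)
      rw [h0] at hsp
      simp at hsp
    have hmin := Nat.find_min h2 (Nat.sub_lt hk1 one_pos)
    push_neg at hmin
    exact hmin
  · exfalso
    apply h2
    refine ⟨n, fun A hA => ?_⟩
    rw [selList_full_take]
    by_contra hnot
    exact h ⟨A, hA, hnot⟩

/-- Characterization of strongly tight MAD families. -/
theorem stronglyTight_mad_iff (𝒜 : Set (Set ℕ)) (hmad : IsMADFamily 𝒜) :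
    StronglyTight (idealOf 𝒜) ↔
      ∀ B : ℕ → Set ℕ, (∀ n, (B n).Infinite) →
        (∃ A' : ℕ → Set ℕ, (∀ n, A' n ∈ 𝒜 ∧ B n ⊆ A' n) ∧
          ∀ A ∈ 𝒜, {n : ℕ | A' n = A}.Finite) →
        ∃ C ∈ idealOf 𝒜, ∀ n, (C ∩ B n).Nonempty := by
  classical
  obtain ⟨⟨h𝒜inf, h𝒜mem, h𝒜pair⟩, h𝒜max⟩ := hmad
  constructor
  · -- strongly tight → RHS
    rintro hST B hBinf ⟨A', hA'1, hA'2⟩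
    apply hST B hBinf
    rintro Y ⟨F, hF𝒜, hFfin, hYF⟩
    have hsub : {n | (B n \ Y).Finite} ⊆ ⋃ A ∈ F, {n | A' n = A} := by
      intro n hn
      simp only [Set.mem_setOf_eq] at hn
      have h1 : (B n \ ⋃₀ F).Finite := by
        refine Set.Finite.subset (hn.union hYF) ?_
        intro x hx
        by_cases hxY : x ∈ Y
        · exact Or.inr ⟨hxY, hx.2⟩
        · exact Or.inl ⟨hx.1, hxY⟩
      have h2 : (B n ∩ ⋃₀ F).Infinite := by
        intro hfin
        refine hBinf n (Set.Finite.subset (h1.union hfin) ?_)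
        intro x hx
        by_cases hxF : x ∈ ⋃₀ F
        · exact Or.inr ⟨hx, hxF⟩
        · exact Or.inl ⟨hx, hxF⟩
      have h3 : ∃ A ∈ F, (B n ∩ A).Infinite := by
        by_contra hcon
        push_neg at hcon
        apply h2
        have hbu : B n ∩ ⋃₀ F ⊆ ⋃ A ∈ F, B n ∩ A := by
          rintro x ⟨hxB, A, hAF, hxA⟩
          exact Set.mem_biUnion hAF ⟨hxB, hxA⟩
        refine Set.Finite.subset (Set.Finite.biUnion hFfin fun A hA => ?_) hbu
        exact hcon A hA
      obtain ⟨A, hAF, hABinf⟩ := h3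
      have hAeq : A' n = A := by
        by_contra hne
        have hfin := h𝒜pair (A' n) (hA'1 n).1 A (hF𝒜 hAF) hne
        have hsub2 : B n ∩ A ⊆ A' n ∩ A := fun x hx => ⟨(hA'1 n).2 hx.1, hx.2⟩
        exact hABinf.mono hsub2 hfin
      exact Set.mem_biUnion hAF hAeq
    exact (hFfin.biUnion fun A hA => hA'2 A (hF𝒜 hA)).subset hsub
  · -- RHS → strongly tight
    intro hRHS X hXinf hH
    set C : ℕ → Set (Set ℕ) := fun n => {A | A ∈ 𝒜 ∧ (X n ∩ A).Infinite} with hCdef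
    have hCne : ∀ n, (C n).Nonempty := by
      intro n
      obtain ⟨A, hA, hAX⟩ := h𝒜max (X n) (hXinf n)
      exact ⟨A, show A ∈ 𝒜 ∧ (X n ∩ A).Infinite from ⟨hA, hAX⟩⟩
    have hC𝒜 : ∀ n, C n ⊆ 𝒜 := fun n A hA => hA.1
    have hClaim : ∀ F : Set (Set ℕ), F ⊆ 𝒜 → F.Finite → {n | C n ⊆ F}.Finite := by
      intro F hF𝒜 hFfin
      have hYI : ⋃₀ F ∈ idealOf 𝒜 := ⟨F, hF𝒜, hFfin, by simp⟩
      refine (hH _ hYI).subset ?_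
      intro n hn
      simp only [Set.mem_setOf_eq] at hn ⊢
      by_contra hinf
      obtain ⟨A, hA𝒜, hAint⟩ := h𝒜max _ hinf
      have hACn : A ∈ C n := ⟨hA𝒜, hAint.mono fun x hx => ⟨hx.1.1, hx.2⟩⟩
      obtain ⟨x, hx⟩ := hAint.nonempty
      exact hx.1.2 ⟨A, hn hACn, hx.2⟩
    have hfib : ∀ A : Set ℕ, {n | selW C n = A}.Finite := by
      intro A
      by_cases hex : ∃ j, selW C j = A ∧ selW C j ∉ selList C j
      · obtain ⟨j₀, hj₀, hj₀'⟩ := hex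
        have huniq : ∀ j, selW C j = A → selW C j ∉ selList C j → j = j₀ := by
          intro j hj hj'
          by_contra hne
          rcases lt_or_gt_of_ne hne with hlt | hgt
          · exact hj₀' ((mem_selList C j₀ (selW C j₀)).2 ⟨j, hlt, hj.trans hj₀.symm⟩)
          · exact hj' ((mem_selList C j (selW C j)).2 ⟨j₀, hgt, hj₀.trans hj.symm⟩)
        have hFsub : {B | B ∈ selList C (j₀+1)} ⊆ 𝒜 := by
          intro A' hA'
          obtain ⟨m, _, hme⟩ := (mem_selList C (j₀+1) A').1 hA'
          exact hC𝒜 m (hme ▸ (selW_spec C hCne m).1)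
        have hFfin : {B | B ∈ selList C (j₀+1)}.Finite := (selList C (j₀+1)).finite_toSet
        refine Set.Finite.subset ((hClaim _ hFsub hFfin).insert j₀) ?_
        intro n hn
        simp only [Set.mem_setOf_eq] at hn
        by_cases hmem : selW C n ∈ selList C n
        · obtain ⟨j, hjn, hjeq, hjnot, hjC⟩ := (selW_spec C hCne n).2 hmem
          have hjj : j = j₀ := huniq j (hjeq.trans hn) hjnot
          refine Set.mem_insert_iff.2 (Or.inr ?_)
          intro A' hA'
          exact hjj ▸ hjC A' hA'
        · exact Set.mem_insert_iff.2 (Or.inl (huniq n hn hmem))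
      · refine Set.Finite.subset Set.finite_empty ?_
        intro n hn
        exfalso
        simp only [Set.mem_setOf_eq] at hn
        by_cases hmem : selW C n ∈ selList C n
        · obtain ⟨j, _, hjeq, hjnot, _⟩ := (selW_spec C hCne n).2 hmem
          exact hex ⟨j, hjeq.trans hn, hjnot⟩
        · exact hex ⟨n, hn, hmem⟩
    obtain ⟨C₀, hC₀I, hC₀⟩ := hRHS (fun n => X n ∩ selW C n)
      (fun n => ((selW_spec C hCne n).1).2)
      ⟨selW C, fun n => ⟨hC𝒜 n (selW_spec C hCne n).1, Set.inter_subset_right⟩,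
        fun A _ => hfib A⟩
    exact ⟨C₀, hC₀I, fun n =>
      (hC₀ n).mono (Set.inter_subset_inter_right _ Set.inter_subset_left)⟩
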